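/- Let n ≥ 1 and let f, g : S_{n,n} → ℤ with f ≤ g. There exists an alternating sign matrix A of order n with f(i,j) ≤ A(i,j) ≤ g(i,j) for all (i,j) if and only if σ₁(X') + σ₂(X'') ≥ n + f̃(X' ∩ X'') − g̃(X'ᶜ ∩ X''ᶜ) holds for every X', X'' ⊆ S_{n,n}. -/

import Mathlib

/-- The set of positions of an m×n matrix, 1-based: S_{m,n} = [m] × [n]. -/
def Smn (m n : ℕ) : Finset (ℕ × ℕ) := Finset.Icc 1 m ×ˢ Finset.Icc 1 n

/-- The horizontal prefix P¹_{i,j} = {(i,1), …, (i,j)}. -/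
def hPrefix (i j : ℕ) : Finset (ℕ × ℕ) := {i} ×ˢ Finset.Icc 1 j

/-- The vertical prefix P²_{i,j} = {(1,j), …, (i,j)}. -/
def vPrefix (i j : ℕ) : Finset (ℕ × ℕ) := Finset.Icc 1 i ×ˢ {j}

/-- x̃(X), the sum of the entries of x at the positions in X. -/
def fsum (x : ℕ × ℕ → ℤ) (X : Finset (ℕ × ℕ)) : ℤ := ∑ s ∈ X, x s

/-- A is a prefix-bounded matrix (PBM) of size m×n with respect to the
horizontal-prefix bounds Φ1 ≤ Γ1 and the vertical-prefix bounds Φ2 ≤ Γ2. -/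
def IsPBM (m n : ℕ) (Φ1 Γ1 Φ2 Γ2 : ℕ × ℕ → ℤ) (A : ℕ × ℕ → ℤ) : Prop :=
  ∀ i ∈ Finset.Icc 1 m, ∀ j ∈ Finset.Icc 1 n,
    (Φ1 (i, j) ≤ fsum A (hPrefix i j) ∧ fsum A (hPrefix i j) ≤ Γ1 (i, j)) ∧
    (Φ2 (i, j) ≤ fsum A (vPrefix i j) ∧ fsum A (vPrefix i j) ≤ Γ2 (i, j))

/-- Starting positions of the maximal horizontal segments of X ⊆ S_{m,n}. -/
def hStarts (X : Finset (ℕ × ℕ)) : Finset (ℕ × ℕ) :=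
  X.filter (fun s => (s.1, s.2 - 1) ∉ X)

/-- Ending positions of the maximal horizontal segments of X ⊆ S_{m,n}. -/
def hEnds (X : Finset (ℕ × ℕ)) : Finset (ℕ × ℕ) :=
  X.filter (fun s => (s.1, s.2 + 1) ∉ X)

/-- Starting positions of the maximal vertical segments of X ⊆ S_{m,n}. -/
def vStarts (X : Finset (ℕ × ℕ)) : Finset (ℕ × ℕ) :=
  X.filter (fun s => (s.1 - 1, s.2) ∉ X)

/-- Ending positions of the maximal vertical segments of X ⊆ S_{m,n}. -/
def vEnds (X : Finset (ℕ × ℕ)) : Finset (ℕ × ℕ) :=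
  X.filter (fun s => (s.1 + 1, s.2) ∉ X)

/-- σ₁(X): the number of maximal horizontal segments of X. -/
def sigma1 (X : Finset (ℕ × ℕ)) : ℕ := (hStarts X).card

/-- σ₂(X): the number of maximal vertical segments of X. -/
def sigma2 (X : Finset (ℕ × ℕ)) : ℕ := (vStarts X).card

/-- p*₁(X) = Σ [Φ¹(i,j₂) − Γ¹(i,j₁−1)] over the maximal horizontal segments
{(i,j₁),…,(i,j₂)} of X, with the convention Γ¹(i,0) = 0. -/
def pstar1 (Φ1 Γ1 : ℕ × ℕ → ℤ) (X : Finset (ℕ × ℕ)) : ℤ :=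
  ∑ s ∈ hEnds X, Φ1 s -
    ∑ s ∈ hStarts X, (if s.2 = 1 then 0 else Γ1 (s.1, s.2 - 1))

/-- b*₁(X) = Σ [Γ¹(i,j₂) − Φ¹(i,j₁−1)] over the maximal horizontal segments
{(i,j₁),…,(i,j₂)} of X, with the convention Φ¹(i,0) = 0. -/
def bstar1 (Φ1 Γ1 : ℕ × ℕ → ℤ) (X : Finset (ℕ × ℕ)) : ℤ :=
  ∑ s ∈ hEnds X, Γ1 s -
    ∑ s ∈ hStarts X, (if s.2 = 1 then 0 else Φ1 (s.1, s.2 - 1))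

/-- p*₂(X) = Σ [Φ²(i₂,j) − Γ²(i₁−1,j)] over the maximal vertical segments
{(i₁,j),…,(i₂,j)} of X, with the convention Γ²(0,j) = 0. -/
def pstar2 (Φ2 Γ2 : ℕ × ℕ → ℤ) (X : Finset (ℕ × ℕ)) : ℤ :=
  ∑ s ∈ vEnds X, Φ2 s -
    ∑ s ∈ vStarts X, (if s.1 = 1 then 0 else Γ2 (s.1 - 1, s.2))

/-- b*₂(X) = Σ [Γ²(i₂,j) − Φ²(i₁−1,j)] over the maximal vertical segments
{(i₁,j),…,(i₂,j)} of X, with the convention Φ²(0,j) = 0. -/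
def bstar2 (Φ2 Γ2 : ℕ × ℕ → ℤ) (X : Finset (ℕ × ℕ)) : ℤ :=
  ∑ s ∈ vEnds X, Γ2 s -
    ∑ s ∈ vStarts X, (if s.1 = 1 then 0 else Φ2 (s.1 - 1, s.2))

/-- A is an alternating sign matrix (ASM) of order n: every horizontal and
vertical prefix sum lies in {0, 1}, and every full row sum and full column
sum equals 1. -/
def IsASM (n : ℕ) (A : ℕ × ℕ → ℤ) : Prop :=
  (∀ i ∈ Finset.Icc 1 n, ∀ j ∈ Finset.Icc 1 n,
    (fsum A (hPrefix i j) = 0 ∨ fsum A (hPrefix i j) = 1) ∧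
    (fsum A (vPrefix i j) = 0 ∨ fsum A (vPrefix i j) = 1)) ∧
  (∀ i ∈ Finset.Icc 1 n, fsum A (hPrefix i n) = 1) ∧
  (∀ j ∈ Finset.Icc 1 n, fsum A (vPrefix n j) = 1)

section Aux

open Finset

lemma fsum_eq_ind (f : ℕ × ℕ → ℤ) {X E : Finset (ℕ × ℕ)} (h : X ⊆ E) :
    fsum f X = ∑ s ∈ E, if s ∈ X then f s else 0 := by
  rw [Finset.sum_ite_mem, Finset.inter_eq_right.mpr h, fsum]

lemma fsum_sdiff' (f : ℕ × ℕ → ℤ) {X E : Finset (ℕ × ℕ)} (h : X ⊆ E) :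
    fsum f (E \ X) = fsum f E - fsum f X := by
  unfold fsum
  rw [eq_sub_iff_add_eq, Finset.sum_sdiff h]

lemma fsum_mono {f g : ℕ × ℕ → ℤ} {X : Finset (ℕ × ℕ)}
    (h : ∀ s ∈ X, f s ≤ g s) : fsum f X ≤ fsum g X :=
  Finset.sum_le_sum h

lemma sigma1_add_card (X : Finset (ℕ × ℕ)) :
    sigma1 X + (X.filter (fun s : ℕ × ℕ => (s.1, s.2 - 1) ∈ X)).card = X.card := by
  unfold sigma1 hStarts
  rw [add_comm]
  exact Finset.card_filter_add_card_filter_not (fun s : ℕ × ℕ => (s.1, s.2-1) ∈ X)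

lemma sigma2_add_card (X : Finset (ℕ × ℕ)) :
    sigma2 X + (X.filter (fun s : ℕ × ℕ => (s.1 - 1, s.2) ∈ X)).card = X.card := by
  unfold sigma2 vStarts
  rw [add_comm]
  exact Finset.card_filter_add_card_filter_not (fun s : ℕ × ℕ => (s.1-1, s.2) ∈ X)

lemma card_filter_pair_le (X Y : Finset (ℕ × ℕ)) (p : ℕ × ℕ → ℕ × ℕ) :
    (X.filter (fun s : ℕ × ℕ => p s ∈ X)).card + (Y.filter (fun s : ℕ × ℕ => p s ∈ Y)).card ≤
      ((X ∪ Y).filter (fun s : ℕ × ℕ => p s ∈ X ∪ Y)).card +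
      ((X ∩ Y).filter (fun s : ℕ × ℕ => p s ∈ X ∩ Y)).card := by
  classical
  have key : ∀ Z : Finset (ℕ × ℕ), Z ⊆ X ∪ Y →
      (Z.filter (fun s : ℕ × ℕ => p s ∈ Z)).card
        = ∑ s ∈ X ∪ Y, (if s ∈ Z ∧ p s ∈ Z then 1 else 0) := by
    intro Z hZ
    rw [Finset.card_filter]
    rw [← Finset.sum_subset hZ (by intro x hx hnx; simp [hnx])]
    exact Finset.sum_congr rfl (fun x hx => by simp [hx])
  rw [key X Finset.subset_union_left, key Y Finset.subset_union_right,
    key (X ∪ Y) (subset_refl _), key (X ∩ Y) (Finset.inter_subset_union)]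
  rw [← Finset.sum_add_distrib, ← Finset.sum_add_distrib]
  apply Finset.sum_le_sum
  intro s _
  by_cases h1 : s ∈ X <;> by_cases h2 : s ∈ Y <;>
    by_cases h3 : p s ∈ X <;> by_cases h4 : p s ∈ Y <;>
    simp [h1, h2, h3, h4]

lemma sigma1_submod (X Y : Finset (ℕ × ℕ)) :
    sigma1 (X ∪ Y) + sigma1 (X ∩ Y) ≤ sigma1 X + sigma1 Y := by
  have h1 := sigma1_add_card X
  have h2 := sigma1_add_card Y
  have h3 := sigma1_add_card (X ∪ Y)
  have h4 := sigma1_add_card (X ∩ Y)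
  have h5 := card_filter_pair_le X Y (fun s : ℕ × ℕ => (s.1, s.2-1))
  have h6 : (X ∪ Y).card + (X ∩ Y).card = X.card + Y.card :=
    Finset.card_union_add_card_inter X Y
  omega

lemma sigma2_submod (X Y : Finset (ℕ × ℕ)) :
    sigma2 (X ∪ Y) + sigma2 (X ∩ Y) ≤ sigma2 X + sigma2 Y := by
  have h1 := sigma2_add_card X
  have h2 := sigma2_add_card Y
  have h3 := sigma2_add_card (X ∪ Y)
  have h4 := sigma2_add_card (X ∩ Y)
  have h5 := card_filter_pair_le X Y (fun s : ℕ × ℕ => (s.1-1, s.2))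
  have h6 : (X ∪ Y).card + (X ∩ Y).card = X.card + Y.card :=
    Finset.card_union_add_card_inter X Y
  omega

/-- The defect set of the mixed uncrossing. -/
def Ddef (X₁ X₂ Y₁ Y₂ : Finset (ℕ × ℕ)) : Finset (ℕ × ℕ) :=
  ((X₁ ∩ X₂) \ (Y₁ ∪ Y₂)) ∪ ((Y₁ ∩ Y₂) \ (X₁ ∪ X₂))

lemma uncross_f (f : ℕ × ℕ → ℤ) (X₁ X₂ Y₁ Y₂ : Finset (ℕ × ℕ)) :
    fsum f (X₁ ∩ X₂) + fsum f (Y₁ ∩ Y₂) =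
      fsum f ((X₁ ∪ Y₁) ∩ (X₂ ∩ Y₂)) + fsum f ((X₁ ∩ Y₁) ∩ (X₂ ∪ Y₂)) +
      fsum f (Ddef X₁ X₂ Y₁ Y₂) := by
  classical
  set E := X₁ ∪ X₂ ∪ Y₁ ∪ Y₂ with hE
  have hsub : ∀ {Z : Finset (ℕ × ℕ)}, Z ⊆ X₁ → Z ⊆ E := by
    intro Z h; intro x hx; simp [hE, Finset.mem_union]; have := h hx; tauto
  have e1 : X₁ ∩ X₂ ⊆ E := by intro x hx; simp [hE, Finset.mem_union] at *; tauto
  have e2 : Y₁ ∩ Y₂ ⊆ E := by intro x hx; simp [hE, Finset.mem_union] at *; tauto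
  have e3 : (X₁ ∪ Y₁) ∩ (X₂ ∩ Y₂) ⊆ E := by
    intro x hx; simp [hE, Finset.mem_union] at *; tauto
  have e4 : (X₁ ∩ Y₁) ∩ (X₂ ∪ Y₂) ⊆ E := by
    intro x hx; simp [hE, Finset.mem_union] at *; tauto
  have e5 : Ddef X₁ X₂ Y₁ Y₂ ⊆ E := by
    intro x hx; simp [Ddef, hE, Finset.mem_union, Finset.mem_sdiff] at *; tauto
  rw [fsum_eq_ind f e1, fsum_eq_ind f e2, fsum_eq_ind f e3, fsum_eq_ind f e4,
    fsum_eq_ind f e5, ← Finset.sum_add_distrib, ← Finset.sum_add_distrib,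
    ← Finset.sum_add_distrib]
  apply Finset.sum_congr rfl
  intro s _
  by_cases h1 : s ∈ X₁ <;> by_cases h2 : s ∈ X₂ <;>
    by_cases h3 : s ∈ Y₁ <;> by_cases h4 : s ∈ Y₂ <;>
    simp [Ddef, h1, h2, h3, h4]

lemma uncross_g (g : ℕ × ℕ → ℤ) {S X₁ X₂ Y₁ Y₂ : Finset (ℕ × ℕ)}
    (hX₁ : X₁ ⊆ S) (hX₂ : X₂ ⊆ S) (hY₁ : Y₁ ⊆ S) (hY₂ : Y₂ ⊆ S) :
    fsum g ((S \ X₁) ∩ (S \ X₂)) + fsum g ((S \ Y₁) ∩ (S \ Y₂)) =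
      fsum g ((S \ (X₁ ∪ Y₁)) ∩ (S \ (X₂ ∩ Y₂))) +
      fsum g ((S \ (X₁ ∩ Y₁)) ∩ (S \ (X₂ ∪ Y₂))) +
      fsum g (Ddef X₁ X₂ Y₁ Y₂) := by
  classical
  have e0 : ∀ {A B : Finset (ℕ × ℕ)}, (S \ A) ∩ (S \ B) ⊆ S := by
    intro A B x hx; simp [Finset.mem_inter, Finset.mem_sdiff] at hx; exact hx.1.1
  have e5 : Ddef X₁ X₂ Y₁ Y₂ ⊆ S := by
    intro x hx
    simp [Ddef, Finset.mem_union, Finset.mem_sdiff, Finset.mem_inter] at hx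
    rcases hx with ⟨⟨h, _⟩, _⟩ | ⟨⟨h, _⟩, _⟩
    exacts [hX₁ h, hY₁ h]
  rw [fsum_eq_ind g (e0 (A := X₁) (B := X₂)), fsum_eq_ind g (e0 (A := Y₁) (B := Y₂)),
    fsum_eq_ind g (e0 (A := X₁ ∪ Y₁) (B := X₂ ∩ Y₂)),
    fsum_eq_ind g (e0 (A := X₁ ∩ Y₁) (B := X₂ ∪ Y₂)),
    fsum_eq_ind g e5, ← Finset.sum_add_distrib, ← Finset.sum_add_distrib,
    ← Finset.sum_add_distrib]
  apply Finset.sum_congr rfl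
  intro s hs
  by_cases h1 : s ∈ X₁ <;> by_cases h2 : s ∈ X₂ <;>
    by_cases h3 : s ∈ Y₁ <;> by_cases h4 : s ∈ Y₂ <;>
    simp [Ddef, h1, h2, h3, h4, hs]

end Aux
section Tele

open Finset

lemma hPrefix_insert (i j : ℕ) (hj : 1 ≤ j) :
    hPrefix i j = insert (i, j) (hPrefix i (j - 1)) := by
  unfold hPrefix
  ext ⟨a, b⟩
  simp [Finset.mem_product, Finset.mem_Icc, Prod.ext_iff]
  omega

lemma entry_eq_R (A : ℕ × ℕ → ℤ) (i j : ℕ) (hj : 1 ≤ j) :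
    A (i, j) = fsum A (hPrefix i j) - fsum A (hPrefix i (j - 1)) := by
  rw [hPrefix_insert i j hj]
  unfold fsum
  rw [Finset.sum_insert (by
    simp only [hPrefix, Finset.mem_product, Finset.mem_Icc, Finset.mem_singleton]
    omega)]
  ring

lemma vPrefix_insert (i j : ℕ) (hi : 1 ≤ i) :
    vPrefix i j = insert (i, j) (vPrefix (i - 1) j) := by
  unfold vPrefix
  ext ⟨a, b⟩
  simp only [Finset.mem_insert, Finset.mem_product, Finset.mem_Icc,
    Finset.mem_singleton, Prod.mk.injEq]
  omega

lemma entry_eq_C (A : ℕ × ℕ → ℤ) (i j : ℕ) (hi : 1 ≤ i) :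
    A (i, j) = fsum A (vPrefix i j) - fsum A (vPrefix (i - 1) j) := by
  rw [vPrefix_insert i j hi]
  unfold fsum
  rw [Finset.sum_insert (by
    simp only [vPrefix, Finset.mem_product, Finset.mem_Icc, Finset.mem_singleton]
    omega)]
  ring

lemma mem_Smn {m n : ℕ} {s : ℕ × ℕ} :
    s ∈ Smn m n ↔ (1 ≤ s.1 ∧ s.1 ≤ m) ∧ (1 ≤ s.2 ∧ s.2 ≤ n) := by
  cases s; simp [Smn, Finset.mem_product, Finset.mem_Icc]

-- bijection between non-starts and non-ends
lemma sum_pred_eq_sum_succ {n : ℕ} {X : Finset (ℕ × ℕ)} (hX : X ⊆ Smn n n)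
    (F : ℕ × ℕ → ℤ) :
    ∑ s ∈ X.filter (fun s : ℕ × ℕ => (s.1, s.2 - 1) ∈ X), F (s.1, s.2 - 1)
      = ∑ s ∈ X.filter (fun s : ℕ × ℕ => (s.1, s.2 + 1) ∈ X), F s := by
  apply Finset.sum_nbij' (i := fun s => (s.1, s.2 - 1)) (j := fun s => (s.1, s.2 + 1))
  · intro s hs
    simp only [Finset.mem_filter] at hs ⊢
    refine ⟨hs.2, ?_⟩
    have h1 : 1 ≤ s.2 := (mem_Smn.mp (hX hs.1)).2.1
    have : (s.1, s.2 - 1 + 1) = s := by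
      cases s; simp at h1 ⊢; omega
    rw [this]; exact hs.1
  · intro s hs
    simp only [Finset.mem_filter] at hs ⊢
    refine ⟨hs.2, ?_⟩
    have : (s.1, s.2 + 1 - 1) = s := by cases s; simp
    rw [this]; exact hs.1
  · intro s hs
    simp only [Finset.mem_filter] at hs
    have h1 : 1 ≤ s.2 := (mem_Smn.mp (hX hs.1)).2.1
    cases s; simp at h1 ⊢; omega
  · intro s hs
    cases s; simp
  · intro s hs; rfl

lemma card_pred_eq_card_succ {n : ℕ} {X : Finset (ℕ × ℕ)} (hX : X ⊆ Smn n n) :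
    (X.filter (fun s : ℕ × ℕ => (s.1, s.2 - 1) ∈ X)).card
      = (X.filter (fun s : ℕ × ℕ => (s.1, s.2 + 1) ∈ X)).card := by
  have := sum_pred_eq_sum_succ (n := n) hX (fun _ => (1 : ℤ))
  simpa using this

lemma card_hEnds {n : ℕ} {X : Finset (ℕ × ℕ)} (hX : X ⊆ Smn n n) :
    (hEnds X).card = sigma1 X := by
  have h1 := sigma1_add_card X
  have h2 : (hEnds X).card + (X.filter (fun s : ℕ × ℕ => (s.1, s.2 + 1) ∈ X)).card
      = X.card := by
    unfold hEnds
    rw [add_comm]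
    exact Finset.card_filter_add_card_filter_not _
  have h3 := card_pred_eq_card_succ (n := n) hX
  omega

/-- Telescoping a sum over a set by maximal horizontal segments. -/
lemma tele1 {n : ℕ} (A : ℕ × ℕ → ℤ) {X : Finset (ℕ × ℕ)} (hX : X ⊆ Smn n n) :
    fsum A X = ∑ s ∈ hEnds X, fsum A (hPrefix s.1 s.2)
      - ∑ s ∈ hStarts X, fsum A (hPrefix s.1 (s.2 - 1)) := by
  classical
  have step : fsum A X = ∑ s ∈ X, fsum A (hPrefix s.1 s.2)
      - ∑ s ∈ X, fsum A (hPrefix s.1 (s.2 - 1)) := by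
    unfold fsum
    rw [← Finset.sum_sub_distrib]
    apply Finset.sum_congr rfl
    intro s hs
    have h1 : 1 ≤ s.2 := (mem_Smn.mp (hX hs)).2.1
    have := entry_eq_R A s.1 s.2 h1
    simpa [fsum] using this
  rw [step]
  have split1 : ∑ s ∈ X, fsum A (hPrefix s.1 s.2)
      = ∑ s ∈ hEnds X, fsum A (hPrefix s.1 s.2)
        + ∑ s ∈ X.filter (fun s : ℕ × ℕ => (s.1, s.2 + 1) ∈ X), fsum A (hPrefix s.1 s.2) := by
    unfold hEnds
    rw [add_comm, Finset.sum_filter_add_sum_filter_not]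
  have split2 : ∑ s ∈ X, fsum A (hPrefix s.1 (s.2 - 1))
      = ∑ s ∈ hStarts X, fsum A (hPrefix s.1 (s.2 - 1))
        + ∑ s ∈ X.filter (fun s : ℕ × ℕ => (s.1, s.2 - 1) ∈ X), fsum A (hPrefix s.1 (s.2 - 1)) := by
    unfold hStarts
    rw [add_comm, Finset.sum_filter_add_sum_filter_not]
  have hmid := sum_pred_eq_sum_succ (n := n) hX (fun s => fsum A (hPrefix s.1 s.2))
  rw [split1, split2]
  simp only at hmid
  rw [hmid]
  ring

end Tele
section Vert

open Finset

lemma sum_pred_eq_sum_succ_v {n : ℕ} {X : Finset (ℕ × ℕ)} (hX : X ⊆ Smn n n)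
    (F : ℕ × ℕ → ℤ) :
    ∑ s ∈ X.filter (fun s : ℕ × ℕ => (s.1 - 1, s.2) ∈ X), F (s.1 - 1, s.2)
      = ∑ s ∈ X.filter (fun s : ℕ × ℕ => (s.1 + 1, s.2) ∈ X), F s := by
  apply Finset.sum_nbij' (i := fun s => (s.1 - 1, s.2)) (j := fun s => (s.1 + 1, s.2))
  · intro s hs
    simp only [Finset.mem_filter] at hs ⊢
    refine ⟨hs.2, ?_⟩
    have h1 : 1 ≤ s.1 := (mem_Smn.mp (hX hs.1)).1.1
    have : (s.1 - 1 + 1, s.2) = s := by cases s; simp at h1 ⊢; omega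
    rw [this]; exact hs.1
  · intro s hs
    simp only [Finset.mem_filter] at hs ⊢
    refine ⟨hs.2, ?_⟩
    have : (s.1 + 1 - 1, s.2) = s := by cases s; simp
    rw [this]; exact hs.1
  · intro s hs
    simp only [Finset.mem_filter] at hs
    have h1 : 1 ≤ s.1 := (mem_Smn.mp (hX hs.1)).1.1
    cases s; simp at h1 ⊢; omega
  · intro s hs; cases s; simp
  · intro s hs; rfl

lemma card_vEnds {n : ℕ} {X : Finset (ℕ × ℕ)} (hX : X ⊆ Smn n n) :
    (vEnds X).card = sigma2 X := by
  have h1 := sigma2_add_card X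
  have h2 : (vEnds X).card + (X.filter (fun s : ℕ × ℕ => (s.1 + 1, s.2) ∈ X)).card
      = X.card := by
    unfold vEnds
    rw [add_comm]
    exact Finset.card_filter_add_card_filter_not _
  have h3 := by
    have := sum_pred_eq_sum_succ_v (n := n) hX (fun _ => (1 : ℤ))
    simpa using this
  omega

lemma tele2 {n : ℕ} (A : ℕ × ℕ → ℤ) {X : Finset (ℕ × ℕ)} (hX : X ⊆ Smn n n) :
    fsum A X = ∑ s ∈ vEnds X, fsum A (vPrefix s.1 s.2)
      - ∑ s ∈ vStarts X, fsum A (vPrefix (s.1 - 1) s.2) := by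
  classical
  have step : fsum A X = ∑ s ∈ X, fsum A (vPrefix s.1 s.2)
      - ∑ s ∈ X, fsum A (vPrefix (s.1 - 1) s.2) := by
    unfold fsum
    rw [← Finset.sum_sub_distrib]
    apply Finset.sum_congr rfl
    intro s hs
    have h1 : 1 ≤ s.1 := (mem_Smn.mp (hX hs)).1.1
    have := entry_eq_C A s.1 s.2 h1
    simpa [fsum] using this
  rw [step]
  have split1 : ∑ s ∈ X, fsum A (vPrefix s.1 s.2)
      = ∑ s ∈ vEnds X, fsum A (vPrefix s.1 s.2)
        + ∑ s ∈ X.filter (fun s : ℕ × ℕ => (s.1 + 1, s.2) ∈ X), fsum A (vPrefix s.1 s.2) := by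
    unfold vEnds
    rw [add_comm, Finset.sum_filter_add_sum_filter_not]
  have split2 : ∑ s ∈ X, fsum A (vPrefix (s.1 - 1) s.2)
      = ∑ s ∈ vStarts X, fsum A (vPrefix (s.1 - 1) s.2)
        + ∑ s ∈ X.filter (fun s : ℕ × ℕ => (s.1 - 1, s.2) ∈ X), fsum A (vPrefix (s.1 - 1) s.2) := by
    unfold vStarts
    rw [add_comm, Finset.sum_filter_add_sum_filter_not]
  have hmid := sum_pred_eq_sum_succ_v (n := n) hX (fun s => fsum A (vPrefix s.1 s.2))
  rw [split1, split2]
  simp only at hmid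
  rw [hmid]
  ring

end Vert

section ASMbounds

open Finset

variable {n : ℕ} {A : ℕ × ℕ → ℤ}

lemma hPrefix_zero (A : ℕ × ℕ → ℤ) (i : ℕ) : fsum A (hPrefix i 0) = 0 := by
  simp [hPrefix, fsum]

lemma vPrefix_zero (A : ℕ × ℕ → ℤ) (j : ℕ) : fsum A (vPrefix 0 j) = 0 := by
  simp [vPrefix, fsum]

lemma asm_R_nonneg (hA : IsASM n A) {i j : ℕ} (hi : 1 ≤ i) (hi' : i ≤ n) (hj : j ≤ n) :
    0 ≤ fsum A (hPrefix i j) := by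
  rcases Nat.eq_zero_or_pos j with h | h
  · rw [h, hPrefix_zero]
  · rcases (hA.1 i (by simp [Finset.mem_Icc]; omega) j (by simp [Finset.mem_Icc]; omega)).1
      with h' | h' <;> omega

lemma asm_R_le_one (hA : IsASM n A) {i j : ℕ} (hi : 1 ≤ i) (hi' : i ≤ n)
    (hj : 1 ≤ j) (hj' : j ≤ n) : fsum A (hPrefix i j) ≤ 1 := by
  rcases (hA.1 i (by simp [Finset.mem_Icc]; omega) j (by simp [Finset.mem_Icc]; omega)).1
    with h' | h' <;> omega

lemma asm_C_nonneg (hA : IsASM n A) {i j : ℕ} (hj : 1 ≤ j) (hj' : j ≤ n) (hi : i ≤ n) :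
    0 ≤ fsum A (vPrefix i j) := by
  rcases Nat.eq_zero_or_pos i with h | h
  · rw [h, vPrefix_zero]
  · rcases (hA.1 i (by simp [Finset.mem_Icc]; omega) j (by simp [Finset.mem_Icc]; omega)).2
      with h' | h' <;> omega

lemma asm_C_le_one (hA : IsASM n A) {i j : ℕ} (hi : 1 ≤ i) (hi' : i ≤ n)
    (hj : 1 ≤ j) (hj' : j ≤ n) : fsum A (vPrefix i j) ≤ 1 := by
  rcases (hA.1 i (by simp [Finset.mem_Icc]; omega) j (by simp [Finset.mem_Icc]; omega)).2
    with h' | h' <;> omega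

lemma asm_sum_le_sigma1 (hA : IsASM n A) {X : Finset (ℕ × ℕ)} (hX : X ⊆ Smn n n) :
    fsum A X ≤ (sigma1 X : ℤ) := by
  rw [tele1 A hX]
  have h1 : ∑ s ∈ hEnds X, fsum A (hPrefix s.1 s.2) ≤ (hEnds X).card • (1 : ℤ) := by
    apply Finset.sum_le_card_nsmul
    intro s hs
    have hsX : s ∈ X := Finset.mem_of_mem_filter s hs
    have hm := mem_Smn.mp (hX hsX)
    exact asm_R_le_one hA hm.1.1 hm.1.2 hm.2.1 hm.2.2
  have h2 : (0 : ℤ) ≤ ∑ s ∈ hStarts X, fsum A (hPrefix s.1 (s.2 - 1)) := by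
    apply Finset.sum_nonneg
    intro s hs
    have hsX : s ∈ X := Finset.mem_of_mem_filter s hs
    have hm := mem_Smn.mp (hX hsX)
    exact asm_R_nonneg hA hm.1.1 hm.1.2 (by omega)
  have h3 : ((hEnds X).card : ℤ) = (sigma1 X : ℤ) := by
    rw [card_hEnds (n := n) hX]
  simp only [nsmul_eq_mul, mul_one] at h1
  omega

lemma asm_sum_le_sigma2 (hA : IsASM n A) {X : Finset (ℕ × ℕ)} (hX : X ⊆ Smn n n) :
    fsum A X ≤ (sigma2 X : ℤ) := by
  rw [tele2 A hX]
  have h1 : ∑ s ∈ vEnds X, fsum A (vPrefix s.1 s.2) ≤ (vEnds X).card • (1 : ℤ) := by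
    apply Finset.sum_le_card_nsmul
    intro s hs
    have hsX : s ∈ X := Finset.mem_of_mem_filter s hs
    have hm := mem_Smn.mp (hX hsX)
    exact asm_C_le_one hA hm.1.1 hm.1.2 hm.2.1 hm.2.2
  have h2 : (0 : ℤ) ≤ ∑ s ∈ vStarts X, fsum A (vPrefix (s.1 - 1) s.2) := by
    apply Finset.sum_nonneg
    intro s hs
    have hsX : s ∈ X := Finset.mem_of_mem_filter s hs
    have hm := mem_Smn.mp (hX hsX)
    exact asm_C_nonneg hA hm.2.1 hm.2.2 (by omega)
  have h3 : ((vEnds X).card : ℤ) = (sigma2 X : ℤ) := by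
    rw [card_vEnds (n := n) hX]
  simp only [nsmul_eq_mul, mul_one] at h1
  omega

lemma asm_total (hA : IsASM n A) : fsum A (Smn n n) = n := by
  unfold fsum Smn
  rw [Finset.sum_product]
  have : ∀ i ∈ Finset.Icc 1 n, ∑ j ∈ Finset.Icc 1 n, A (i, j) = 1 := by
    intro i hi
    have := hA.2.1 i hi
    unfold fsum hPrefix at this
    rw [Finset.singleton_product, Finset.sum_map] at this
    simpa using this
  rw [Finset.sum_congr rfl this]
  simp

lemma incl_excl (A : ℕ × ℕ → ℤ) {n : ℕ} {X₁ X₂ : Finset (ℕ × ℕ)}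
    (h1 : X₁ ⊆ Smn n n) (h2 : X₂ ⊆ Smn n n) :
    fsum A (X₁ ∩ X₂) - fsum A ((Smn n n \ X₁) ∩ (Smn n n \ X₂))
      = fsum A X₁ + fsum A X₂ - fsum A (Smn n n) := by
  classical
  have e1 : X₁ ∩ X₂ ⊆ Smn n n := fun x hx => h1 (Finset.mem_of_mem_inter_left hx)
  have e2 : (Smn n n \ X₁) ∩ (Smn n n \ X₂) ⊆ Smn n n := fun x hx => by
    simp [Finset.mem_inter, Finset.mem_sdiff] at hx; exact hx.1.1
  rw [fsum_eq_ind A e1, fsum_eq_ind A e2, fsum_eq_ind A h1, fsum_eq_ind A h2,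
    fsum_eq_ind A (subset_refl (Smn n n)), ← Finset.sum_sub_distrib,
    ← Finset.sum_add_distrib, ← Finset.sum_sub_distrib]
  apply Finset.sum_congr rfl
  intro s hs
  by_cases m1 : s ∈ X₁ <;> by_cases m2 : s ∈ X₂ <;> simp [m1, m2, hs]

/-- The easy direction. -/
lemma easy_dir {n : ℕ} {f g A : ℕ × ℕ → ℤ} (hA : IsASM n A)
    (hbound : ∀ s ∈ Smn n n, f s ≤ A s ∧ A s ≤ g s)
    {X₁ X₂ : Finset (ℕ × ℕ)} (h1 : X₁ ⊆ Smn n n) (h2 : X₂ ⊆ Smn n n) :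
    (n : ℤ) + fsum f (X₁ ∩ X₂) - fsum g ((Smn n n \ X₁) ∩ (Smn n n \ X₂))
      ≤ (sigma1 X₁ : ℤ) + (sigma2 X₂ : ℤ) := by
  have e1 : X₁ ∩ X₂ ⊆ Smn n n := fun x hx => h1 (Finset.mem_of_mem_inter_left hx)
  have e2 : (Smn n n \ X₁) ∩ (Smn n n \ X₂) ⊆ Smn n n := fun x hx => by
    simp [Finset.mem_inter, Finset.mem_sdiff] at hx; exact hx.1.1
  have hf : fsum f (X₁ ∩ X₂) ≤ fsum A (X₁ ∩ X₂) :=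
    fsum_mono (fun s hs => (hbound s (e1 hs)).1)
  have hg : fsum A ((Smn n n \ X₁) ∩ (Smn n n \ X₂))
      ≤ fsum g ((Smn n n \ X₁) ∩ (Smn n n \ X₂)) :=
    fsum_mono (fun s hs => (hbound s (e2 hs)).2)
  have hie := incl_excl A h1 h2
  have hA1 := asm_sum_le_sigma1 hA h1
  have hA2 := asm_sum_le_sigma2 hA h2
  have ht := asm_total hA
  omega

end ASMbounds
section Base

open Finset

lemma sigma1_le_card {X T : Finset (ℕ × ℕ)} (h : hStarts X ⊆ T) :
    sigma1 X ≤ T.card := Finset.card_le_card h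

lemma sigma2_le_card {X T : Finset (ℕ × ℕ)} (h : vStarts X ⊆ T) :
    sigma2 X ≤ T.card := Finset.card_le_card h

lemma card_col1 (n : ℕ) : ((Finset.Icc 1 n ×ˢ ({1} : Finset ℕ))).card = n := by
  rw [Finset.card_product]; simp

lemma card_row1 (n : ℕ) : ((({1} : Finset ℕ) ×ˢ Finset.Icc 1 n)).card = n := by
  rw [Finset.card_product]; simp

lemma sigma1_S_le (n : ℕ) : sigma1 (Smn n n) ≤ n := by
  refine le_trans (sigma1_le_card ?_) (le_of_eq (card_col1 n))
  intro ⟨a, b⟩ hs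
  simp only [hStarts, Finset.mem_filter, mem_Smn, Finset.mem_product,
    Finset.mem_singleton, Finset.mem_Icc] at hs ⊢
  omega

lemma sigma2_S_le (n : ℕ) : sigma2 (Smn n n) ≤ n := by
  refine le_trans (sigma2_le_card ?_) (le_of_eq (card_row1 n))
  intro ⟨a, b⟩ hs
  simp only [vStarts, Finset.mem_filter, mem_Smn, Finset.mem_product,
    Finset.mem_singleton, Finset.mem_Icc] at hs ⊢
  omega

lemma sigma1_row_le (i n : ℕ) : sigma1 (hPrefix i n) ≤ 1 := by
  refine le_trans (sigma1_le_card ?_) (le_of_eq (by simp : ({(i, 1)} : Finset (ℕ × ℕ)).card = 1))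
  intro ⟨a, b⟩ hs
  simp only [hStarts, Finset.mem_filter, hPrefix, Finset.mem_product,
    Finset.mem_singleton, Finset.mem_Icc, Prod.mk.injEq] at hs ⊢
  omega

lemma sigma2_col_le (j n : ℕ) : sigma2 (vPrefix n j) ≤ 1 := by
  refine le_trans (sigma2_le_card ?_) (le_of_eq (by simp : ({(1, j)} : Finset (ℕ × ℕ)).card = 1))
  intro ⟨a, b⟩ hs
  simp only [vStarts, Finset.mem_filter, vPrefix, Finset.mem_product,
    Finset.mem_singleton, Finset.mem_Icc, Prod.mk.injEq] at hs ⊢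
  omega

lemma sigma1_compl_row_le {i n : ℕ} (hi : 1 ≤ i) (hi' : i ≤ n) :
    sigma1 (Smn n n \ hPrefix i n) ≤ n - 1 := by
  have hcard : ((Finset.Icc 1 n \ {i}) ×ˢ ({1} : Finset ℕ)).card = n - 1 := by
    rw [Finset.card_product, Finset.card_sdiff_of_subset (by simp [Finset.mem_Icc]; omega)]
    simp
  refine le_trans (sigma1_le_card ?_) (le_of_eq hcard)
  intro ⟨a, b⟩ hs
  simp only [hStarts, Finset.mem_filter, Finset.mem_sdiff, mem_Smn, hPrefix,
    Finset.mem_product, Finset.mem_singleton, Finset.mem_Icc] at hs ⊢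
  omega

lemma sigma2_compl_col_le {j n : ℕ} (hj : 1 ≤ j) (hj' : j ≤ n) :
    sigma2 (Smn n n \ vPrefix n j) ≤ n - 1 := by
  have hcard : (({1} : Finset ℕ) ×ˢ (Finset.Icc 1 n \ {j})).card = n - 1 := by
    rw [Finset.card_product, Finset.card_sdiff_of_subset (by simp [Finset.mem_Icc]; omega)]
    simp
  refine le_trans (sigma2_le_card ?_) (le_of_eq hcard)
  intro ⟨a, b⟩ hs
  simp only [vStarts, Finset.mem_filter, Finset.mem_sdiff, mem_Smn, vPrefix,
    Finset.mem_product, Finset.mem_singleton, Finset.mem_Icc] at hs ⊢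
  omega

lemma sigma1_compl_prefix_le {i j n : ℕ} (hi : 1 ≤ i) (hi' : i ≤ n) (hj : 1 ≤ j) :
    sigma1 (Smn n n \ hPrefix i j) ≤ n := by
  have hsub : hStarts (Smn n n \ hPrefix i j)
      ⊆ ((Finset.Icc 1 n \ {i}) ×ˢ ({1} : Finset ℕ)) ∪ {(i, j + 1)} := by
    intro ⟨a, b⟩ hs
    simp only [hStarts, Finset.mem_filter, Finset.mem_sdiff, mem_Smn, hPrefix,
      Finset.mem_product, Finset.mem_singleton, Finset.mem_Icc, Finset.mem_union,
      Prod.mk.injEq] at hs ⊢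
    omega
  calc sigma1 (Smn n n \ hPrefix i j) ≤ _ := sigma1_le_card hsub
    _ ≤ ((Finset.Icc 1 n \ {i}) ×ˢ ({1} : Finset ℕ)).card + ({(i, j+1)} : Finset (ℕ × ℕ)).card :=
        Finset.card_union_le _ _
    _ ≤ n := by
        rw [Finset.card_product, Finset.card_sdiff_of_subset (by simp [Finset.mem_Icc]; omega)]
        simp
        omega

lemma sigma2_compl_prefix_le {i j n : ℕ} (hj : 1 ≤ j) (hj' : j ≤ n) (hi : 1 ≤ i) :
    sigma2 (Smn n n \ vPrefix i j) ≤ n := by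
  have hsub : vStarts (Smn n n \ vPrefix i j)
      ⊆ (({1} : Finset ℕ) ×ˢ (Finset.Icc 1 n \ {j})) ∪ {(i + 1, j)} := by
    intro ⟨a, b⟩ hs
    simp only [vStarts, Finset.mem_filter, Finset.mem_sdiff, mem_Smn, vPrefix,
      Finset.mem_product, Finset.mem_singleton, Finset.mem_Icc, Finset.mem_union,
      Prod.mk.injEq] at hs ⊢
    omega
  calc sigma2 (Smn n n \ vPrefix i j) ≤ _ := sigma2_le_card hsub
    _ ≤ (({1} : Finset ℕ) ×ˢ (Finset.Icc 1 n \ {j})).card + ({(i+1, j)} : Finset (ℕ × ℕ)).card :=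
        Finset.card_union_le _ _
    _ ≤ n := by
        rw [Finset.card_product, Finset.card_sdiff_of_subset (by simp [Finset.mem_Icc]; omega)]
        simp
        omega

lemma sigma1_compl_tail_le {i j n : ℕ} (hi : 1 ≤ i) (hi' : i ≤ n) (hj : 1 ≤ j) :
    sigma1 (Smn n n \ (({i} : Finset ℕ) ×ˢ Finset.Icc (j + 1) n)) ≤ n := by
  refine le_trans (sigma1_le_card ?_) (le_of_eq (card_col1 n))
  intro ⟨a, b⟩ hs
  simp only [hStarts, Finset.mem_filter, Finset.mem_sdiff, mem_Smn,
    Finset.mem_product, Finset.mem_singleton, Finset.mem_Icc] at hs ⊢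
  omega

lemma sigma2_compl_tail_le {i j n : ℕ} (hj : 1 ≤ j) (hj' : j ≤ n) (hi : 1 ≤ i) :
    sigma2 (Smn n n \ (Finset.Icc (i + 1) n ×ˢ ({j} : Finset ℕ))) ≤ n := by
  refine le_trans (sigma2_le_card ?_) (le_of_eq (card_row1 n))
  intro ⟨a, b⟩ hs
  simp only [vStarts, Finset.mem_filter, Finset.mem_sdiff, mem_Smn,
    Finset.mem_product, Finset.mem_singleton, Finset.mem_Icc] at hs ⊢
  omega

lemma row_split (f : ℕ × ℕ → ℤ) {i j n : ℕ} (hj : j ≤ n) :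
    fsum f (hPrefix i j) + fsum f (({i} : Finset ℕ) ×ˢ Finset.Icc (j + 1) n)
      = fsum f (hPrefix i n) := by
  unfold fsum hPrefix
  rw [← Finset.sum_union]
  · congr 1
    ext ⟨a, b⟩
    simp only [Finset.mem_union, Finset.mem_product, Finset.mem_singleton, Finset.mem_Icc]
    omega
  · rw [Finset.disjoint_left]
    intro ⟨a, b⟩ h1 h2
    simp only [Finset.mem_product, Finset.mem_singleton, Finset.mem_Icc] at h1 h2
    omega

lemma col_split (f : ℕ × ℕ → ℤ) {i j n : ℕ} (hi : i ≤ n) :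
    fsum f (vPrefix i j) + fsum f (Finset.Icc (i + 1) n ×ˢ ({j} : Finset ℕ))
      = fsum f (vPrefix n j) := by
  unfold fsum vPrefix
  rw [← Finset.sum_union]
  · congr 1
    ext ⟨a, b⟩
    simp only [Finset.mem_union, Finset.mem_product, Finset.mem_singleton, Finset.mem_Icc]
    omega
  · rw [Finset.disjoint_left]
    intro ⟨a, b⟩ h1 h2
    simp only [Finset.mem_product, Finset.mem_singleton, Finset.mem_Icc] at h1 h2
    omega

lemma hPrefix_subset {i j n : ℕ} (hi : 1 ≤ i) (hi' : i ≤ n) (hj : j ≤ n) :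
    hPrefix i j ⊆ Smn n n := by
  intro ⟨a, b⟩ h
  simp only [hPrefix, mem_Smn, Finset.mem_product, Finset.mem_singleton,
    Finset.mem_Icc] at h ⊢
  omega

lemma vPrefix_subset {i j n : ℕ} (hj : 1 ≤ j) (hj' : j ≤ n) (hi : i ≤ n) :
    vPrefix i j ⊆ Smn n n := by
  intro ⟨a, b⟩ h
  simp only [vPrefix, mem_Smn, Finset.mem_product, Finset.mem_singleton,
    Finset.mem_Icc] at h ⊢
  omega

lemma tail_subset {i j n : ℕ} (hi : 1 ≤ i) (hi' : i ≤ n) (hj : 1 ≤ j) :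
    (({i} : Finset ℕ) ×ˢ Finset.Icc (j + 1) n) ⊆ Smn n n := by
  intro ⟨a, b⟩ h
  simp only [mem_Smn, Finset.mem_product, Finset.mem_singleton, Finset.mem_Icc] at h ⊢
  omega

lemma tail_subset_v {i j n : ℕ} (hj : 1 ≤ j) (hj' : j ≤ n) (hi : 1 ≤ i) :
    (Finset.Icc (i + 1) n ×ˢ ({j} : Finset ℕ)) ⊆ Smn n n := by
  intro ⟨a, b⟩ h
  simp only [mem_Smn, Finset.mem_product, Finset.mem_singleton, Finset.mem_Icc] at h ⊢
  omega

end Base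
section BaseMain

open Finset

/-- Condition (B2). -/
def CondB2 (n : ℕ) (f g : ℕ × ℕ → ℤ) : Prop :=
  ∀ X₁ ⊆ Smn n n, ∀ X₂ ⊆ Smn n n,
    (n : ℤ) + fsum f (X₁ ∩ X₂) - fsum g ((Smn n n \ X₁) ∩ (Smn n n \ X₂))
      ≤ (sigma1 X₁ : ℤ) + (sigma2 X₂ : ℤ)

lemma fsum_empty (f : ℕ × ℕ → ℤ) : fsum f ∅ = 0 := by simp [fsum]

lemma sigma1_empty : sigma1 (∅ : Finset (ℕ × ℕ)) = 0 := by simp [sigma1, hStarts]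
lemma sigma2_empty : sigma2 (∅ : Finset (ℕ × ℕ)) = 0 := by simp [sigma2, vStarts]

lemma base_case {n : ℕ} (hn : 1 ≤ n) {f g : ℕ × ℕ → ℤ}
    (hEq : ∀ s ∈ Smn n n, f s = g s) (hB2 : CondB2 n f g) : IsASM n f := by
  -- total sum equals n
  have hfS_le : fsum f (Smn n n) ≤ n := by
    have := hB2 (Smn n n) (subset_refl (Smn n n)) (Smn n n) (subset_refl (Smn n n))
    rw [Finset.inter_self, Finset.sdiff_self, Finset.inter_self, fsum_empty] at this
    have s1 := sigma1_S_le n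
    have s2 := sigma2_S_le n
    omega
  have hgS_ge : (n : ℤ) ≤ fsum g (Smn n n) := by
    have := hB2 ∅ (Finset.empty_subset _) ∅ (Finset.empty_subset _)
    rw [Finset.inter_self, Finset.sdiff_empty, Finset.inter_self, fsum_empty,
      sigma1_empty, sigma2_empty] at this
    omega
  have hfgS : fsum f (Smn n n) = fsum g (Smn n n) := Finset.sum_congr rfl hEq
  have hfS : fsum f (Smn n n) = n := by omega
  -- helper to apply B2 with X₂ = (Smn n n)
  have hrow : ∀ X₁ ⊆ (Smn n n), (n : ℤ) + fsum f X₁ ≤ (sigma1 X₁ : ℤ) + n := by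
    intro X₁ h₁
    have := hB2 X₁ h₁ (Smn n n) (subset_refl (Smn n n))
    rw [Finset.inter_eq_left.mpr h₁, Finset.sdiff_self, Finset.inter_empty,
      fsum_empty] at this
    have s2 := sigma2_S_le n
    omega
  have hcol : ∀ X₂ ⊆ (Smn n n), (n : ℤ) + fsum f X₂ ≤ (sigma2 X₂ : ℤ) + n := by
    intro X₂ h₂
    have := hB2 (Smn n n) (subset_refl (Smn n n)) X₂ h₂
    rw [Finset.inter_eq_right.mpr h₂, Finset.sdiff_self, Finset.empty_inter,
      fsum_empty] at this
    have s1 := sigma1_S_le n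
    omega
  -- row sums are 1
  have hrowsum : ∀ i, 1 ≤ i → i ≤ n → fsum f (hPrefix i n) = 1 := by
    intro i hi hi'
    have hsub := hPrefix_subset (n := n) hi hi' (le_refl n)
    have h1 := hrow _ hsub
    have s1 := sigma1_row_le i n
    have h2 := hrow _ (Finset.sdiff_subset (s := (Smn n n)) (t := hPrefix i n))
    have hsd := fsum_sdiff' f hsub
    have s2 := sigma1_compl_row_le (n := n) hi hi'
    rw [hsd, hfS] at h2
    have hc1 : ((sigma1 (hPrefix i n) : ℤ)) ≤ 1 := by exact_mod_cast s1
    have hc2 : ((sigma1 ((Smn n n) \ hPrefix i n) : ℤ)) ≤ (n : ℤ) - 1 := by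
      have : ((n - 1 : ℕ) : ℤ) = (n : ℤ) - 1 := by omega
      rw [← this]; exact_mod_cast s2
    omega
  have hcolsum : ∀ j, 1 ≤ j → j ≤ n → fsum f (vPrefix n j) = 1 := by
    intro j hj hj'
    have hsub := vPrefix_subset (n := n) hj hj' (le_refl n)
    have h1 := hcol _ hsub
    have s1 := sigma2_col_le j n
    have h2 := hcol _ (Finset.sdiff_subset (s := (Smn n n)) (t := vPrefix n j))
    have hsd := fsum_sdiff' f hsub
    have s2 := sigma2_compl_col_le (n := n) hj hj'
    rw [hsd, hfS] at h2
    have hc1 : ((sigma2 (vPrefix n j) : ℤ)) ≤ 1 := by exact_mod_cast s1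
    have hc2 : ((sigma2 ((Smn n n) \ vPrefix n j) : ℤ)) ≤ (n : ℤ) - 1 := by
      have : ((n - 1 : ℕ) : ℤ) = (n : ℤ) - 1 := by omega
      rw [← this]; exact_mod_cast s2
    omega
  -- horizontal prefix sums in {0,1}
  have hpre : ∀ i j, 1 ≤ i → i ≤ n → 1 ≤ j → j ≤ n →
      0 ≤ fsum f (hPrefix i j) ∧ fsum f (hPrefix i j) ≤ 1 := by
    intro i j hi hi' hj hj'
    constructor
    · have hsub := hPrefix_subset (n := n) hi hi' hj'
      have h2 := hrow _ (Finset.sdiff_subset (s := (Smn n n)) (t := hPrefix i j))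
      have hsd := fsum_sdiff' f hsub
      have s2 := sigma1_compl_prefix_le (n := n) hi hi' hj
      rw [hsd, hfS] at h2
      have hc : ((sigma1 ((Smn n n) \ hPrefix i j) : ℤ)) ≤ (n : ℤ) := by exact_mod_cast s2
      omega
    · have hsubT := tail_subset (n := n) hi hi' hj
      have h2 := hrow _ (Finset.sdiff_subset
        (s := (Smn n n)) (t := ({i} : Finset ℕ) ×ˢ Finset.Icc (j+1) n))
      have hsd := fsum_sdiff' f hsubT
      have s2 := sigma1_compl_tail_le (n := n) (j := j) hi hi' hj
      have hsplit := row_split f (i := i) (j := j) (n := n) hj'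
      have hrs := hrowsum i hi hi'
      rw [hsd, hfS] at h2
      have hc : ((sigma1 ((Smn n n) \ (({i} : Finset ℕ) ×ˢ Finset.Icc (j+1) n)) : ℤ)) ≤ (n : ℤ) := by
        exact_mod_cast s2
      omega
  have hpre2 : ∀ i j, 1 ≤ i → i ≤ n → 1 ≤ j → j ≤ n →
      0 ≤ fsum f (vPrefix i j) ∧ fsum f (vPrefix i j) ≤ 1 := by
    intro i j hi hi' hj hj'
    constructor
    · have hsub := vPrefix_subset (n := n) hj hj' hi'
      have h2 := hcol _ (Finset.sdiff_subset (s := (Smn n n)) (t := vPrefix i j))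
      have hsd := fsum_sdiff' f hsub
      have s2 := sigma2_compl_prefix_le (n := n) hj hj' hi
      rw [hsd, hfS] at h2
      have hc : ((sigma2 ((Smn n n) \ vPrefix i j) : ℤ)) ≤ (n : ℤ) := by exact_mod_cast s2
      omega
    · have hsubT := tail_subset_v (n := n) hj hj' hi
      have h2 := hcol _ (Finset.sdiff_subset
        (s := (Smn n n)) (t := Finset.Icc (i+1) n ×ˢ ({j} : Finset ℕ)))
      have hsd := fsum_sdiff' f hsubT
      have s2 := sigma2_compl_tail_le (n := n) (i := i) hj hj' hi
      have hsplit := col_split f (i := i) (j := j) (n := n) hi'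
      have hcs := hcolsum j hj hj'
      rw [hsd, hfS] at h2
      have hc : ((sigma2 ((Smn n n) \ (Finset.Icc (i+1) n ×ˢ ({j} : Finset ℕ))) : ℤ)) ≤ (n : ℤ) := by
        exact_mod_cast s2
      omega
  refine ⟨?_, ?_, ?_⟩
  · intro i hi j hj
    rw [Finset.mem_Icc] at hi hj
    have h1 := hpre i j hi.1 hi.2 hj.1 hj.2
    have h2 := hpre2 i j hi.1 hi.2 hj.1 hj.2
    constructor <;> omega
  · intro i hi
    rw [Finset.mem_Icc] at hi
    exact hrowsum i hi.1 hi.2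
  · intro j hj
    rw [Finset.mem_Icc] at hj
    exact hcolsum j hj.1 hj.2
end BaseMain
section Pinch

open Finset

lemma fsum_update_add (f : ℕ × ℕ → ℤ) (s₀ : ℕ × ℕ) (Z : Finset (ℕ × ℕ)) :
    fsum (fun t => if t = s₀ then f t + 1 else f t) Z
      = fsum f Z + (if s₀ ∈ Z then 1 else 0) := by
  classical
  unfold fsum
  have : ∀ t ∈ Z, (if t = s₀ then f t + 1 else f t) = f t + (if t = s₀ then 1 else 0) := by
    intro t _; by_cases h : t = s₀ <;> simp [h]
  rw [Finset.sum_congr rfl this, Finset.sum_add_distrib, Finset.sum_ite_eq' Z s₀ (fun _ => (1:ℤ))]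

lemma fsum_update_sub (g : ℕ × ℕ → ℤ) (s₀ : ℕ × ℕ) (Z : Finset (ℕ × ℕ)) :
    fsum (fun t => if t = s₀ then g t - 1 else g t) Z
      = fsum g Z - (if s₀ ∈ Z then 1 else 0) := by
  classical
  unfold fsum
  have : ∀ t ∈ Z, (if t = s₀ then g t - 1 else g t) = g t - (if t = s₀ then 1 else 0) := by
    intro t _; by_cases h : t = s₀ <;> simp [h]
  rw [Finset.sum_congr rfl this, Finset.sum_sub_distrib, Finset.sum_ite_eq' Z s₀ (fun _ => (1:ℤ))]

lemma pinch {n : ℕ} {f g : ℕ × ℕ → ℤ} (hfg : ∀ s ∈ Smn n n, f s ≤ g s)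
    (hB2 : CondB2 n f g) {s₀ : ℕ × ℕ} (hs₀ : s₀ ∈ Smn n n) (hlt : f s₀ < g s₀) :
    CondB2 n (fun t => if t = s₀ then f t + 1 else f t) g ∨
    CondB2 n f (fun t => if t = s₀ then g t - 1 else g t) := by
  classical
  by_contra hc
  push_neg at hc
  obtain ⟨h1, h2⟩ := hc
  unfold CondB2 at h1 h2
  push_neg at h1 h2
  obtain ⟨X₁, hX₁, X₂, hX₂, hX⟩ := h1
  obtain ⟨Y₁, hY₁, Y₂, hY₂, hY⟩ := h2
  rw [fsum_update_add] at hX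
  rw [fsum_update_sub] at hY
  have hBX := hB2 X₁ hX₁ X₂ hX₂
  have hBY := hB2 Y₁ hY₁ Y₂ hY₂
  have hsX : s₀ ∈ X₁ ∩ X₂ := by
    by_contra h; rw [if_neg h] at hX; omega
  have hsY : s₀ ∈ (Smn n n \ Y₁) ∩ (Smn n n \ Y₂) := by
    by_contra h; rw [if_neg h] at hY; omega
  rw [if_pos hsX] at hX
  rw [if_pos hsY] at hY
  -- the two tight equalities
  have EX : (n : ℤ) + fsum f (X₁ ∩ X₂) - fsum g ((Smn n n \ X₁) ∩ (Smn n n \ X₂))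
      = (sigma1 X₁ : ℤ) + (sigma2 X₂ : ℤ) := by omega
  have EY : (n : ℤ) + fsum f (Y₁ ∩ Y₂) - fsum g ((Smn n n \ Y₁) ∩ (Smn n n \ Y₂))
      = (sigma1 Y₁ : ℤ) + (sigma2 Y₂ : ℤ) := by omega
  -- apply B2 to the two mixed uncrossings
  have hU1 : X₁ ∪ Y₁ ⊆ Smn n n := Finset.union_subset hX₁ hY₁
  have hU2 : X₂ ∪ Y₂ ⊆ Smn n n := Finset.union_subset hX₂ hY₂
  have hI1 : X₁ ∩ Y₁ ⊆ Smn n n := fun x hx => hX₁ (Finset.mem_of_mem_inter_left hx)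
  have hI2 : X₂ ∩ Y₂ ⊆ Smn n n := fun x hx => hX₂ (Finset.mem_of_mem_inter_left hx)
  have hB1 := hB2 (X₁ ∪ Y₁) hU1 (X₂ ∩ Y₂) hI2
  have hB2' := hB2 (X₁ ∩ Y₁) hI1 (X₂ ∪ Y₂) hU2
  have huf := uncross_f f X₁ X₂ Y₁ Y₂
  have hug := uncross_g g hX₁ hX₂ hY₁ hY₂
  have hsub1 := sigma1_submod X₁ Y₁
  have hsub2 := sigma2_submod X₂ Y₂
  -- the defect sum is positive
  have hDS : Ddef X₁ X₂ Y₁ Y₂ ⊆ Smn n n := by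
    intro x hx
    simp only [Ddef, Finset.mem_union, Finset.mem_sdiff, Finset.mem_inter] at hx
    rcases hx with ⟨⟨h, _⟩, _⟩ | ⟨⟨h, _⟩, _⟩
    exacts [hX₁ h, hY₁ h]
  have hsD : s₀ ∈ Ddef X₁ X₂ Y₁ Y₂ := by
    simp only [Ddef, Finset.mem_union, Finset.mem_sdiff, Finset.mem_inter] at hsX hsY ⊢
    left
    exact ⟨hsX, by tauto⟩
  have hpos : fsum f (Ddef X₁ X₂ Y₁ Y₂) + 1 ≤ fsum g (Ddef X₁ X₂ Y₁ Y₂) := by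
    have h1 : fsum g (Ddef X₁ X₂ Y₁ Y₂) - fsum f (Ddef X₁ X₂ Y₁ Y₂)
        = ∑ t ∈ Ddef X₁ X₂ Y₁ Y₂, (g t - f t) := by
      unfold fsum; rw [Finset.sum_sub_distrib]
    have h2 : g s₀ - f s₀ ≤ ∑ t ∈ Ddef X₁ X₂ Y₁ Y₂, (g t - f t) :=
      Finset.single_le_sum (f := fun t => g t - f t)
        (fun t ht => sub_nonneg.mpr (hfg t (hDS ht))) hsD
    omega
  -- cast submodularity to ℤ
  have hsub1' : (sigma1 (X₁ ∪ Y₁) : ℤ) + (sigma1 (X₁ ∩ Y₁) : ℤ)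
      ≤ (sigma1 X₁ : ℤ) + (sigma1 Y₁ : ℤ) := by exact_mod_cast hsub1
  have hsub2' : (sigma2 (X₂ ∪ Y₂) : ℤ) + (sigma2 (X₂ ∩ Y₂) : ℤ)
      ≤ (sigma2 X₂ : ℤ) + (sigma2 Y₂ : ℤ) := by exact_mod_cast hsub2
  linarith [EX, EY, hB1, hB2', huf, hug, hsub1', hsub2', hpos]

end Pinch

section Main

open Finset

lemma hard_dir {n : ℕ} (hn : 1 ≤ n) :
    ∀ N : ℕ, ∀ f g : ℕ × ℕ → ℤ, (∀ s ∈ Smn n n, f s ≤ g s) → CondB2 n f g →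
      (∑ s ∈ Smn n n, (g s - f s)) ≤ (N : ℤ) →
      ∃ A : ℕ × ℕ → ℤ, IsASM n A ∧ ∀ s ∈ Smn n n, f s ≤ A s ∧ A s ≤ g s := by
  intro N
  induction N with
  | zero =>
    intro f g hfg hB2 hsum
    have hz : ∀ s ∈ Smn n n, g s - f s = 0 := by
      intro s hs
      have hnn : ∀ s ∈ Smn n n, 0 ≤ g s - f s := fun s hs => by
        have := hfg s hs; omega
      have := (Finset.sum_eq_zero_iff_of_nonneg hnn).mp
        (le_antisymm (by exact_mod_cast hsum) (Finset.sum_nonneg hnn)) s hs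
      exact this
    have hEq : ∀ s ∈ Smn n n, f s = g s := fun s hs => by have := hz s hs; omega
    exact ⟨f, base_case hn hEq hB2, fun s hs => ⟨le_refl _, hfg s hs⟩⟩
  | succ N ih =>
    intro f g hfg hB2 hsum
    by_cases hEq : ∀ s ∈ Smn n n, f s = g s
    · exact ⟨f, base_case hn hEq hB2, fun s hs => ⟨le_refl _, hfg s hs⟩⟩
    · push_neg at hEq
      obtain ⟨s₀, hs₀, hne⟩ := hEq
      have hlt : f s₀ < g s₀ := lt_of_le_of_ne (hfg s₀ hs₀) hne
      rcases pinch hfg hB2 hs₀ hlt with hp | hp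
      · set f' := fun t => if t = s₀ then f t + 1 else f t with hf'
        have hfg' : ∀ s ∈ Smn n n, f' s ≤ g s := by
          intro s hs
          by_cases h : s = s₀
          · subst h; simp only [hf', if_pos rfl]; omega
          · simp only [hf', if_neg h]; exact hfg s hs
        have hsum' : (∑ s ∈ Smn n n, (g s - f' s)) ≤ (N : ℤ) := by
          have hpt : ∀ s ∈ Smn n n, g s - f' s = (g s - f s) - (if s = s₀ then 1 else 0) := by
            intro s _
            by_cases h : s = s₀
            · subst h; simp only [hf', if_pos rfl, eq_self_iff_true, if_true]; ring
            · simp only [hf', if_neg h, if_neg h]; ring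
          rw [Finset.sum_congr rfl hpt, Finset.sum_sub_distrib,
            Finset.sum_ite_eq' (Smn n n) s₀ (fun _ => (1:ℤ)), if_pos hs₀]
          push_cast at hsum ⊢
          omega
        obtain ⟨A, hA, hb⟩ := ih f' g hfg' hp hsum'
        refine ⟨A, hA, fun s hs => ⟨?_, (hb s hs).2⟩⟩
        have := (hb s hs).1
        by_cases h : s = s₀
        · subst h; simp only [hf', if_pos rfl] at this; omega
        · simp only [hf', if_neg h] at this; omega
      · set g' := fun t => if t = s₀ then g t - 1 else g t with hg'
        have hfg' : ∀ s ∈ Smn n n, f s ≤ g' s := by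
          intro s hs
          by_cases h : s = s₀
          · subst h; simp only [hg', if_pos rfl]; omega
          · simp only [hg', if_neg h]; exact hfg s hs
        have hsum' : (∑ s ∈ Smn n n, (g' s - f s)) ≤ (N : ℤ) := by
          have hpt : ∀ s ∈ Smn n n, g' s - f s = (g s - f s) - (if s = s₀ then 1 else 0) := by
            intro s _
            by_cases h : s = s₀
            · subst h; simp only [hg', if_pos rfl, eq_self_iff_true, if_true]; ring
            · simp only [hg', if_neg h, if_neg h]; ring
          rw [Finset.sum_congr rfl hpt, Finset.sum_sub_distrib,
            Finset.sum_ite_eq' (Smn n n) s₀ (fun _ => (1:ℤ)), if_pos hs₀]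
          push_cast at hsum ⊢
          omega
        obtain ⟨A, hA, hb⟩ := ih f g' hfg' hp hsum'
        refine ⟨A, hA, fun s hs => ⟨(hb s hs).1, ?_⟩⟩
        have := (hb s hs).2
        by_cases h : s = s₀
        · subst h; simp only [hg', if_pos rfl] at this; omega
        · simp only [hg', if_neg h] at this; omega

end Main
/-- existence of an alternating sign matrix with entries between
f and g (Theorem AS-feas, condition (B2)). -/
theorem stmt_16 (n : ℕ) (hn : 1 ≤ n) (f g : ℕ × ℕ → ℤ)
    (hfg : ∀ s ∈ Smn n n, f s ≤ g s) :
    (∃ A : ℕ × ℕ → ℤ, IsASM n A ∧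
        ∀ s ∈ Smn n n, f s ≤ A s ∧ A s ≤ g s) ↔
      (∀ X' ⊆ Smn n n, ∀ X'' ⊆ Smn n n,
        (n : ℤ) + fsum f (X' ∩ X'') -
            fsum g ((Smn n n \ X') ∩ (Smn n n \ X'')) ≤
          (sigma1 X' : ℤ) + (sigma2 X'' : ℤ)) := by
  constructor
  · rintro ⟨A, hA, hb⟩ X₁ h₁ X₂ h₂
    exact easy_dir hA hb h₁ h₂
  · intro hB2
    exact hard_dir hn ((∑ s ∈ Smn n n, (g s - f s)).toNat) f g hfg hB2
      (Int.self_le_toNat _)
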